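/- arXiv:1707.05437 — 2 statements merged into one kernel-verified Lean document; each statement's English description precedes it below -/
import Mathlib

section
/- Region symmetry: define region A as the set of pairs (α₁, α₂) of reals with 1/4 ≤ α₁ ≤ 2/5 and (1−α₁)/3 ≤ α₂ ≤ min(α₁, (3δ−1)/2, 1−2α₁), and region B as the set of pairs (α₁, α₂) with (3−3δ)/4 ≤ α₁ ≤ 1/2 and max(α₁/2, 1−2α₁) ≤ α₂ ≤ min((3δ−1)/2, (1−α₁)/2). Then for δ with 0.524 < δ ≤ 1, (α₁, α₂) ∈ A if and only if (1 − α₁ − α₂, α₂) ∈ B. -/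
/-- Region symmetry: `(α₁, α₂) ∈ A` iff `(1 − α₁ − α₂, α₂) ∈ B`, for the regions
`A`, `B` from the final decomposition, where `0.524 < δ ≤ 1`. -/
theorem region_A_B_symmetry (δ : ℝ) (hδ₁ : 0.524 < δ) (hδ₂ : δ ≤ 1) (α₁ α₂ : ℝ) :
    (1/4 ≤ α₁ ∧ α₁ ≤ 2/5 ∧ (1 - α₁)/3 ≤ α₂ ∧
        α₂ ≤ min α₁ (min ((3*δ - 1)/2) (1 - 2*α₁))) ↔
    ((3 - 3*δ)/4 ≤ 1 - α₁ - α₂ ∧ 1 - α₁ - α₂ ≤ 1/2 ∧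
        max ((1 - α₁ - α₂)/2) (1 - 2*(1 - α₁ - α₂)) ≤ α₂ ∧
        α₂ ≤ min ((3*δ - 1)/2) ((1 - (1 - α₁ - α₂))/2)) := by
  norm_num at hδ₁
  simp only [le_min_iff, max_le_iff] at *
  constructor
  · rintro ⟨h1, h2, h3, h4, h5, h6⟩
    refine ⟨by linarith, by linarith, ⟨by linarith, by linarith⟩, by linarith, by linarith⟩
  · rintro ⟨h1, h2, ⟨h3, h4⟩, h5, h6⟩
    refine ⟨by linarith, by linarith, by linarith, by linarith, by linarith, by linarith⟩
end

section
/- Let h ≥ 1, and define h = ⌈(1/2 − α)/(2δ − 1)⌉ for α ∈ [0, 1/2] and δ ∈ (1/2, 1]. Define α* = max((2h(1−δ) − α)/(2h−1), (2(h−1)δ + α)/(2h−1)). Then 1 − δ ≤ α* ≤ 1/2. -/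
/-- With `h = ⌈(1/2 − α)/(2δ − 1)⌉` and
`α* = max((2h(1−δ) − α)/(2h−1), (2(h−1)δ + α)/(2h−1))`, we have `1 − δ ≤ α* ≤ 1/2`. -/
theorem alpha_star_bounds (α δ : ℝ) (hα₀ : 0 ≤ α) (hα₁ : α < 1/2)
    (hδ₀ : 1/2 < δ) (hδ₁ : δ ≤ 1) (h : ℕ)
    (hh : h = Nat.ceil ((1/2 - α) / (2*δ - 1))) :
    1 - δ ≤ max ((2*(h : ℝ)*(1 - δ) - α) / (2*(h : ℝ) - 1))
              ((2*((h : ℝ) - 1)*δ + α) / (2*(h : ℝ) - 1)) ∧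
    max ((2*(h : ℝ)*(1 - δ) - α) / (2*(h : ℝ) - 1))
        ((2*((h : ℝ) - 1)*δ + α) / (2*(h : ℝ) - 1)) ≤ 1/2 := by
  have hd : (0:ℝ) < 2*δ - 1 := by linarith
  have hx : 0 < (1/2 - α) / (2*δ - 1) := div_pos (by linarith) hd
  have h1 : 1 ≤ h := by
    rw [hh]; exact Nat.one_le_ceil_iff.mpr hx
  have hub : (1/2 - α) / (2*δ - 1) ≤ (h:ℝ) := by rw [hh]; exact Nat.le_ceil _
  have hlb : ((h:ℝ) - 1) < (1/2 - α) / (2*δ - 1) := by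
    have hlt : (h - 1 : ℕ) < h := by omega
    rw [hh] at hlt
    have := Nat.lt_ceil.mp hlt
    rw [← hh] at this
    have hc : ((h - 1 : ℕ) : ℝ) = (h:ℝ) - 1 := by
      push_cast [Nat.cast_sub h1]; ring
    rwa [hc] at this
  have hub' : 1/2 - α ≤ (h:ℝ) * (2*δ-1) := (div_le_iff₀ hd).mp hub
  have hlb' : ((h:ℝ)-1) * (2*δ-1) < 1/2 - α := (lt_div_iff₀ hd).mp hlb
  have h1' : (1:ℝ) ≤ (h:ℝ) := by exact_mod_cast h1
  have hD : (0:ℝ) < 2*(h:ℝ) - 1 := by linarith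
  constructor
  · have ha : 1 - δ ≤ ((2*(h:ℝ)*(1 - δ) - α) + (2*((h:ℝ) - 1)*δ + α)) / (2*(h:ℝ) - 1) / 2 := by
      rw [div_div, le_div_iff₀ (by linarith : (0:ℝ) < (2*(h:ℝ)-1)*2)]
      nlinarith [mul_nonneg (by linarith : (0:ℝ) ≤ 2*δ-1) (by linarith : (0:ℝ) ≤ (h:ℝ)-1)]
    rcases le_total ((2*(h:ℝ)*(1 - δ) - α) / (2*(h:ℝ) - 1))
        ((2*((h:ℝ) - 1)*δ + α) / (2*(h:ℝ) - 1)) with h'|h'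
    · rw [max_eq_right h']; rw [add_div] at ha; linarith
    · rw [max_eq_left h']; rw [add_div] at ha; linarith
  · apply max_le
    · rw [div_le_iff₀ hD]; nlinarith
    · rw [div_le_iff₀ hD]; nlinarith
end
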